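/- Let y1, y2, y3 : (0,1) → ℝ be twice differentiable and set K = exp∘y1, phi1 = exp∘y2, phi2 = exp∘y3, and F = 3 − 2 K^{-1/3}(phi1^2 phi2)^{1/3} − 2 K^{-1/3}(phi1^{-1} phi2)^{1/3} − 2 K^{-1/3}(phi1 phi2^2)^{-1/3} + K^{-1/3} phi1^{-4/3} phi2^{-2/3} + K^{-1/3} phi1^{2/3} phi2^{-2/3} + K^{-1/3} phi1^{2/3} phi2^{4/3}. Suppose that on (0,1) the three equations hold: (G2) y1'' − x^{-1}(5+7x^2)(1−x^2)^{-1} y1' + (1/2)(y1')^2 + 16(1−x^2)^{-2} F = 0; (G3) y2'' − 2x^{-1}(1+2x^2)(1−x^2)^{-1} y2' + (1/2) y1' y2' + 32(1−x^2)^{-2} K^{-1/3}[ phi1^{2/3} phi2^{1/3} − phi1^{-1/3} phi2^{1/3} − phi1^{2/3} phi2^{-2/3} + phi1^{-4/3} phi2^{-2/3} ] = 0; (G4) y3'' − 2x^{-1}(1+2x^2)(1−x^2)^{-1} y3' + (1/2) y1' y3' + 32(1−x^2)^{-2} K^{-1/3}[ phi1^{-1/3} phi2^{1/3} − phi1^{-1/3}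 phi2^{-2/3} − phi1^{2/3} phi2^{4/3} + phi1^{2/3} phi2^{-2/3} ] = 0. Define Phi(x) = (y1')^2 − [(y2')^2 + y2' y3' + (y3')^2] − 12 x^{-1}(1+x^2)(1−x^2)^{-1} y1' + 48(1−x^2)^{-2} F. Then Phi is differentiable on (0,1) and satisfies Phi'(x) + ( y1'(x) − x^{-1}(4+8x^2)(1−x^2)^{-1} ) Phi(x) = 0 for all x ∈ (0,1). -/

import Mathlib

open Real Set

/-- The curvature quantity `F` of the generalized Berger Einstein ODE system, with
`K = exp ∘ y1`, `phi1 = exp ∘ y2`, `phi2 = exp ∘ y3`: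
`F = 3 − 2K^{-1/3}(phi1² phi2)^{1/3} − 2K^{-1/3}(phi1⁻¹ phi2)^{1/3}
  − 2K^{-1/3}(phi1 phi2²)^{-1/3} + K^{-1/3} phi1^{-4/3} phi2^{-2/3}
  + K^{-1/3} phi1^{2/3} phi2^{-2/3} + K^{-1/3} phi1^{2/3} phi2^{4/3}`. -/
noncomputable def GBergerF (y1 y2 y3 : ℝ → ℝ) (x : ℝ) : ℝ :=
  3 - 2 * Real.exp (y1 x) ^ (-(1:ℝ)/3) * (Real.exp (y2 x) ^ 2 * Real.exp (y3 x)) ^ ((1:ℝ)/3)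
    - 2 * Real.exp (y1 x) ^ (-(1:ℝ)/3) * ((Real.exp (y2 x))⁻¹ * Real.exp (y3 x)) ^ ((1:ℝ)/3)
    - 2 * Real.exp (y1 x) ^ (-(1:ℝ)/3) * (Real.exp (y2 x) * Real.exp (y3 x) ^ 2) ^ (-(1:ℝ)/3)
    + Real.exp (y1 x) ^ (-(1:ℝ)/3) * Real.exp (y2 x) ^ (-(4:ℝ)/3) * Real.exp (y3 x) ^ (-(2:ℝ)/3)
    + Real.exp (y1 x) ^ (-(1:ℝ)/3) * Real.exp (y2 x) ^ ((2:ℝ)/3) * Real.exp (y3 x) ^ (-(2:ℝ)/3)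
    + Real.exp (y1 x) ^ (-(1:ℝ)/3) * Real.exp (y2 x) ^ ((2:ℝ)/3) * Real.exp (y3 x) ^ ((4:ℝ)/3)

/-- The constraint quantity `Phi` of the generalized Berger Einstein ODE system. -/
noncomputable def GBergerPhi (y1 y2 y3 : ℝ → ℝ) (x : ℝ) : ℝ :=
  (deriv y1 x)^2 - ((deriv y2 x)^2 + deriv y2 x * deriv y3 x + (deriv y3 x)^2)
    - 12 * x⁻¹ * (1 + x^2) * (1 - x^2)⁻¹ * deriv y1 x
    + 48 * ((1 - x^2)⁻¹)^2 * GBergerF y1 y2 y3 x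

lemma exp_form (y1 y2 y3 : ℝ → ℝ) (x : ℝ) :
    GBergerF y1 y2 y3 x
      = 3 - 2 * Real.exp ((-(y1 x) + 2*y2 x + y3 x)/3)
          - 2 * Real.exp ((-(y1 x) - y2 x + y3 x)/3)
          - 2 * Real.exp ((-(y1 x) - y2 x - 2*y3 x)/3)
          + Real.exp ((-(y1 x) - 4*y2 x - 2*y3 x)/3)
          + Real.exp ((-(y1 x) + 2*y2 x - 2*y3 x)/3)
          + Real.exp ((-(y1 x) + 2*y2 x + 4*y3 x)/3) := by
  unfold GBergerF
  simp only [pow_two, ← Real.exp_neg, ← Real.exp_add, ← Real.exp_mul]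
  ring_nf
  simp only [← Real.exp_add]
  ring_nf

lemma exp_form3 (u v w : ℝ) :
    Real.exp u ^ (-(1:ℝ)/3) *
      (Real.exp v ^ ((2:ℝ)/3) * Real.exp w ^ ((1:ℝ)/3)
        - Real.exp v ^ (-(1:ℝ)/3) * Real.exp w ^ ((1:ℝ)/3)
        - Real.exp v ^ ((2:ℝ)/3) * Real.exp w ^ (-(2:ℝ)/3)
        + Real.exp v ^ (-(4:ℝ)/3) * Real.exp w ^ (-(2:ℝ)/3))
    = Real.exp ((-u + 2*v + w)/3) - Real.exp ((-u - v + w)/3)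
      - Real.exp ((-u + 2*v - 2*w)/3) + Real.exp ((-u - 4*v - 2*w)/3) := by
  simp only [mul_sub, mul_add, ← Real.exp_add, ← Real.exp_mul]
  ring_nf

lemma exp_form4 (u v w : ℝ) :
    Real.exp u ^ (-(1:ℝ)/3) *
      (Real.exp v ^ (-(1:ℝ)/3) * Real.exp w ^ ((1:ℝ)/3)
        - Real.exp v ^ (-(1:ℝ)/3) * Real.exp w ^ (-(2:ℝ)/3)
        - Real.exp v ^ ((2:ℝ)/3) * Real.exp w ^ ((4:ℝ)/3)
        + Real.exp v ^ ((2:ℝ)/3) * Real.exp w ^ (-(2:ℝ)/3))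
    = Real.exp ((-u - v + w)/3) - Real.exp ((-u - v - 2*w)/3)
      - Real.exp ((-u + 2*v + 4*w)/3) + Real.exp ((-u + 2*v - 2*w)/3) := by
  simp only [mul_sub, mul_add, ← Real.exp_add, ← Real.exp_mul]
  ring_nf


set_option maxHeartbeats 4000000 in
set_option maxRecDepth 100000 in
/-- if (G2), (G3), (G4) hold on `(0,1)`, the constraint quantity `Phi`
is differentiable on `(0,1)` and satisfies
`Phi' + (y1' − x⁻¹(4+8x²)(1−x²)⁻¹) Phi = 0`. -/
theorem generalized_berger_Phi_ode (y1 y2 y3 : ℝ → ℝ)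
    (hd1 : ∀ t ∈ Ioo (0:ℝ) 1, DifferentiableAt ℝ y1 t)
    (hd1' : ∀ t ∈ Ioo (0:ℝ) 1, DifferentiableAt ℝ (deriv y1) t)
    (hd2 : ∀ t ∈ Ioo (0:ℝ) 1, DifferentiableAt ℝ y2 t)
    (hd2' : ∀ t ∈ Ioo (0:ℝ) 1, DifferentiableAt ℝ (deriv y2) t)
    (hd3 : ∀ t ∈ Ioo (0:ℝ) 1, DifferentiableAt ℝ y3 t)
    (hd3' : ∀ t ∈ Ioo (0:ℝ) 1, DifferentiableAt ℝ (deriv y3) t)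
    (hG2 : ∀ x ∈ Ioo (0:ℝ) 1,
      deriv (deriv y1) x - x⁻¹ * (5 + 7*x^2) * (1 - x^2)⁻¹ * deriv y1 x
        + (1/2) * (deriv y1 x)^2 + 16 * ((1 - x^2)⁻¹)^2 * GBergerF y1 y2 y3 x = 0)
    (hG3 : ∀ x ∈ Ioo (0:ℝ) 1,
      deriv (deriv y2) x - 2 * x⁻¹ * (1 + 2*x^2) * (1 - x^2)⁻¹ * deriv y2 x
        + (1/2) * deriv y1 x * deriv y2 x
        + 32 * ((1 - x^2)⁻¹)^2 * Real.exp (y1 x) ^ (-(1:ℝ)/3) *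
          (Real.exp (y2 x) ^ ((2:ℝ)/3) * Real.exp (y3 x) ^ ((1:ℝ)/3)
            - Real.exp (y2 x) ^ (-(1:ℝ)/3) * Real.exp (y3 x) ^ ((1:ℝ)/3)
            - Real.exp (y2 x) ^ ((2:ℝ)/3) * Real.exp (y3 x) ^ (-(2:ℝ)/3)
            + Real.exp (y2 x) ^ (-(4:ℝ)/3) * Real.exp (y3 x) ^ (-(2:ℝ)/3)) = 0)
    (hG4 : ∀ x ∈ Ioo (0:ℝ) 1,
      deriv (deriv y3) x - 2 * x⁻¹ * (1 + 2*x^2) * (1 - x^2)⁻¹ * deriv y3 x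
        + (1/2) * deriv y1 x * deriv y3 x
        + 32 * ((1 - x^2)⁻¹)^2 * Real.exp (y1 x) ^ (-(1:ℝ)/3) *
          (Real.exp (y2 x) ^ (-(1:ℝ)/3) * Real.exp (y3 x) ^ ((1:ℝ)/3)
            - Real.exp (y2 x) ^ (-(1:ℝ)/3) * Real.exp (y3 x) ^ (-(2:ℝ)/3)
            - Real.exp (y2 x) ^ ((2:ℝ)/3) * Real.exp (y3 x) ^ ((4:ℝ)/3)
            + Real.exp (y2 x) ^ ((2:ℝ)/3) * Real.exp (y3 x) ^ (-(2:ℝ)/3)) = 0) :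
    ∀ x ∈ Ioo (0:ℝ) 1,
      HasDerivAt (GBergerPhi y1 y2 y3)
        (-((deriv y1 x - x⁻¹ * (4 + 8*x^2) * (1 - x^2)⁻¹) * GBergerPhi y1 y2 y3 x)) x := by
  intro x hx
  obtain ⟨hx0', hx1'⟩ := hx
  have hx0 : x ≠ 0 := ne_of_gt hx0'
  have hx1 : (1:ℝ) - x^2 ≠ 0 := by nlinarith
  have hy1 := (hd1 x ⟨hx0', hx1'⟩).hasDerivAt
  have hy2 := (hd2 x ⟨hx0', hx1'⟩).hasDerivAt
  have hy3 := (hd3 x ⟨hx0', hx1'⟩).hasDerivAt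
  have hA1 := (hd1' x ⟨hx0', hx1'⟩).hasDerivAt
  have hA2 := (hd2' x ⟨hx0', hx1'⟩).hasDerivAt
  have hA3 := (hd3' x ⟨hx0', hx1'⟩).hasDerivAt
  -- exponential pieces
  have he1 : HasDerivAt (fun t => Real.exp ((-(y1 t) + 2*y2 t + y3 t)/3))
      (Real.exp ((-(y1 x) + 2*y2 x + y3 x)/3) * ((-(deriv y1 x) + 2*deriv y2 x + deriv y3 x)/3)) x :=
    (((hy1.neg.add (hy2.const_mul 2)).add hy3).div_const 3).exp
  have he2 : HasDerivAt (fun t => Real.exp ((-(y1 t) - y2 t + y3 t)/3))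
      (Real.exp ((-(y1 x) - y2 x + y3 x)/3) * ((-(deriv y1 x) - deriv y2 x + deriv y3 x)/3)) x :=
    (((hy1.neg.sub hy2).add hy3).div_const 3).exp
  have he3 : HasDerivAt (fun t => Real.exp ((-(y1 t) - y2 t - 2*y3 t)/3))
      (Real.exp ((-(y1 x) - y2 x - 2*y3 x)/3) * ((-(deriv y1 x) - deriv y2 x - 2*deriv y3 x)/3)) x :=
    (((hy1.neg.sub hy2).sub (hy3.const_mul 2)).div_const 3).exp
  have he4 : HasDerivAt (fun t => Real.exp ((-(y1 t) - 4*y2 t - 2*y3 t)/3))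
      (Real.exp ((-(y1 x) - 4*y2 x - 2*y3 x)/3) * ((-(deriv y1 x) - 4*deriv y2 x - 2*deriv y3 x)/3)) x :=
    (((hy1.neg.sub (hy2.const_mul 4)).sub (hy3.const_mul 2)).div_const 3).exp
  have he5 : HasDerivAt (fun t => Real.exp ((-(y1 t) + 2*y2 t - 2*y3 t)/3))
      (Real.exp ((-(y1 x) + 2*y2 x - 2*y3 x)/3) * ((-(deriv y1 x) + 2*deriv y2 x - 2*deriv y3 x)/3)) x :=
    (((hy1.neg.add (hy2.const_mul 2)).sub (hy3.const_mul 2)).div_const 3).exp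
  have he6 : HasDerivAt (fun t => Real.exp ((-(y1 t) + 2*y2 t + 4*y3 t)/3))
      (Real.exp ((-(y1 x) + 2*y2 x + 4*y3 x)/3) * ((-(deriv y1 x) + 2*deriv y2 x + 4*deriv y3 x)/3)) x :=
    (((hy1.neg.add (hy2.const_mul 2)).add (hy3.const_mul 4)).div_const 3).exp
  -- rational pieces
  have hinv : HasDerivAt (fun t : ℝ => t⁻¹) (-(x^2)⁻¹) x := hasDerivAt_inv hx0
  have hsq : HasDerivAt (fun t : ℝ => t^2) (2*x) x := by simpa using hasDerivAt_pow 2 x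
  have h1p : HasDerivAt (fun t : ℝ => 1 + t^2) (2*x) x := hsq.const_add 1
  have h1m : HasDerivAt (fun t : ℝ => 1 - t^2) (-(2*x)) x := hsq.const_sub 1
  have hwinv := h1m.inv hx1
  -- assemble
  have hF := ((((((he1.const_mul 2).const_sub 3).sub (he2.const_mul 2)).sub
      (he3.const_mul 2)).add he4).add he5).add he6
  have hterm1 := hA1.pow 2
  have hterm2 := ((hA2.pow 2).add (hA2.mul hA3)).add (hA3.pow 2)
  have hterm3 := (((hinv.const_mul (12:ℝ)).mul h1p).mul hwinv).mul hA1
  have hterm4 := ((hwinv.pow 2).const_mul (48:ℝ)).mul hF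
  have hbig := ((hterm1.sub hterm2).sub hterm3).add hterm4
  have hPhiEq : GBergerPhi y1 y2 y3 = fun t =>
      (deriv y1 t)^2 - ((deriv y2 t)^2 + deriv y2 t * deriv y3 t + (deriv y3 t)^2)
        - 12 * t⁻¹ * (1 + t^2) * (1 - t^2)⁻¹ * deriv y1 t
        + 48 * ((1 - t^2)⁻¹)^2 *
          (3 - 2 * Real.exp ((-(y1 t) + 2*y2 t + y3 t)/3)
            - 2 * Real.exp ((-(y1 t) - y2 t + y3 t)/3)
            - 2 * Real.exp ((-(y1 t) - y2 t - 2*y3 t)/3)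
            + Real.exp ((-(y1 t) - 4*y2 t - 2*y3 t)/3)
            + Real.exp ((-(y1 t) + 2*y2 t - 2*y3 t)/3)
            + Real.exp ((-(y1 t) + 2*y2 t + 4*y3 t)/3)) :=
    funext fun t => by rw [GBergerPhi, exp_form]
  rw [hPhiEq]
  convert hbig using 1
  case e'_4 => rfl
  case e'_5 => rfl
  case e'_8 => rfl
  -- rewrite hypotheses in exp form
  have hG2x := hG2 x ⟨hx0', hx1'⟩
  rw [exp_form] at hG2x
  have hG3x := hG3 x ⟨hx0', hx1'⟩
  rw [mul_assoc (32 * ((1 - x^2)⁻¹)^2), exp_form3] at hG3x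
  have hG4x := hG4 x ⟨hx0', hx1'⟩
  rw [mul_assoc (32 * ((1 - x^2)⁻¹)^2), exp_form4] at hG4x
  have hAe : deriv (deriv y1) x =
      x⁻¹ * (5 + 7*x^2) * (1 - x^2)⁻¹ * deriv y1 x - (1/2) * (deriv y1 x)^2
        - 16 * ((1 - x^2)⁻¹)^2 *
          (3 - 2 * Real.exp ((-(y1 x) + 2*y2 x + y3 x)/3)
            - 2 * Real.exp ((-(y1 x) - y2 x + y3 x)/3)
            - 2 * Real.exp ((-(y1 x) - y2 x - 2*y3 x)/3)
            + Real.exp ((-(y1 x) - 4*y2 x - 2*y3 x)/3)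
            + Real.exp ((-(y1 x) + 2*y2 x - 2*y3 x)/3)
            + Real.exp ((-(y1 x) + 2*y2 x + 4*y3 x)/3)) := by linarith
  have hBe : deriv (deriv y2) x =
      2 * x⁻¹ * (1 + 2*x^2) * (1 - x^2)⁻¹ * deriv y2 x - (1/2) * deriv y1 x * deriv y2 x
        - 32 * ((1 - x^2)⁻¹)^2 *
          (Real.exp ((-(y1 x) + 2*y2 x + y3 x)/3) - Real.exp ((-(y1 x) - y2 x + y3 x)/3)
            - Real.exp ((-(y1 x) + 2*y2 x - 2*y3 x)/3) + Real.exp ((-(y1 x) - 4*y2 x - 2*y3 x)/3)) := by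
    linarith
  have hCe : deriv (deriv y3) x =
      2 * x⁻¹ * (1 + 2*x^2) * (1 - x^2)⁻¹ * deriv y3 x - (1/2) * deriv y1 x * deriv y3 x
        - 32 * ((1 - x^2)⁻¹)^2 *
          (Real.exp ((-(y1 x) - y2 x + y3 x)/3) - Real.exp ((-(y1 x) - y2 x - 2*y3 x)/3)
            - Real.exp ((-(y1 x) + 2*y2 x + 4*y3 x)/3) + Real.exp ((-(y1 x) + 2*y2 x - 2*y3 x)/3)) := by
    linarith
  rw [hAe, hBe, hCe]
  simp only [Pi.add_apply, Pi.sub_apply, Pi.mul_apply, Pi.inv_apply, Pi.pow_apply, Nat.cast_ofNat,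
    Nat.add_one_sub_one, pow_one]
  set E1 := Real.exp ((-(y1 x) + 2*y2 x + y3 x)/3)
  set E2 := Real.exp ((-(y1 x) - y2 x + y3 x)/3)
  set E3 := Real.exp ((-(y1 x) - y2 x - 2*y3 x)/3)
  set E4 := Real.exp ((-(y1 x) - 4*y2 x - 2*y3 x)/3)
  set E5 := Real.exp ((-(y1 x) + 2*y2 x - 2*y3 x)/3)
  set E6 := Real.exp ((-(y1 x) + 2*y2 x + 4*y3 x)/3)
  set a := deriv y1 x
  set b := deriv y2 x
  set c := deriv y3 x
  field_simp
  ring
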